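/- Let k ≥ 0 and a ∈ (0,1). For every n ∈ ℕ, every j ∈ {0,1,…,3ⁿ−1}, and every u ∈ [0, 3^{−n}], writing x_l := j·3^{−n} and x_r := (j+1)·3^{−n}, one has M_{k,a}(x_l + u) − M_{k,a}(x_l) = M_{k,a}(x_r) − M_{k,a}(x_r − u). In particular, for k ≥ 1, M_{k,a}(1−x) = −M_{k,a}(x) for all x ∈ [0,1]. -/

import Mathlib

open Filter Topology MeasureTheory Set
open scoped ENNReal

/-- The `(n+1)`-th ternary digit of `x` (choosing the expansion ending in all `0`s
when two expansions exist, and the all-`2`s expansion for `x = 1`). -/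
noncomputable def tDigit (x : ℝ) (n : ℕ) : ℕ :=
  if x = 1 then 2 else (⌊(3:ℝ) ^ (n + 1) * x⌋ - 3 * ⌊(3:ℝ) ^ n * x⌋).toNat

/-- `l_n(x)`: the number of `1`s among the first `n` ternary digits of `x`. -/
noncomputable def lCount (x : ℝ) (n : ℕ) : ℕ :=
  ((Finset.range n).filter (fun i => tDigit x i = 1)).card

/-- `q_a(d)` with `q_a(0)=0`, `q_a(1)=a`, `q_a(2)=1-a`. -/
noncomputable def qDig (a : ℝ) (d : ℕ) : ℝ :=
  if d = 0 then 0 else if d = 1 then a else 1 - a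

/-- Okamoto's function `F_a`. -/
noncomputable def Okamoto (a x : ℝ) : ℝ :=
  ∑' n : ℕ, a ^ (n - lCount x n) * (1 - 2 * a) ^ lCount x n * qDig a (tDigit x n)

/-- `M_{k,a}(x)`: the `k`-th partial derivative of `F_a(x)` with respect to `a`. -/
noncomputable def Mfun (k : ℕ) (a x : ℝ) : ℝ :=
  iteratedDeriv k (fun b => Okamoto b x) a

/-- `f` has derivative `+∞` at `x` (difference quotients over `y ∈ [0,1] \ {x}`). -/
def derivPInf (f : ℝ → ℝ) (x : ℝ) : Prop :=
  Tendsto (fun y => (f y - f x) / (y - x)) (𝓝[Set.Icc 0 1 \ {x}] x) atTop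

/-- `f` has derivative `-∞` at `x`. -/
def derivMInf (f : ℝ → ℝ) (x : ℝ) : Prop :=
  Tendsto (fun y => (f y - f x) / (y - x)) (𝓝[Set.Icc 0 1 \ {x}] x) atBot

noncomputable def phiOk (a : ℝ) : ℝ :=
  if a = 1/3 then 1/3 else if a = 1/2 then 0
  else Real.log (3 * a) / (Real.log a - Real.log |1 - 2 * a|)

noncomputable def C0 (a : ℝ) : ℝ := 1 / (Real.log a - Real.log |1 - 2 * a|)

noncomputable def hEnt (p : ℝ) : ℝ :=
  (-(p * Real.log p) - (1 - p) * Real.log (1 - p) + (1 - p) * Real.log 2) / Real.log 3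

noncomputable def dOk (a : ℝ) : ℝ := hEnt (phiOk a)

noncomputable def dTilde (a : ℝ) : ℝ := hEnt (1 - 2 * a)

/- ## auxiliary definitions -/


noncomputable def rDig (b : ℝ) (e : ℕ) : ℝ := if e = 1 then 1 - 2 * b else b

noncomputable def okTerm (b : ℝ) (d : ℕ → ℕ) (m : ℕ) : ℝ :=
  (∏ k ∈ Finset.range m, rDig b (d k)) * qDig b (d m)

def dig (n j i : ℕ) : ℕ := j / 3 ^ (n - 1 - i) % 3

noncomputable def Wt (b : ℝ) (n j : ℕ) : ℝ := ∏ k ∈ Finset.range n, rDig b (dig n j k)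

noncomputable def FS (b : ℝ) (n j : ℕ) : ℝ :=
  ∑ i ∈ Finset.range n, (∏ k ∈ Finset.range i, rDig b (dig n j k)) * qDig b (dig n j i)

/- ## basic digit facts -/

lemma floor_triple (y : ℝ) : 3 * ⌊y⌋ ≤ ⌊3 * y⌋ ∧ ⌊3 * y⌋ < 3 * ⌊y⌋ + 3 := by
  constructor
  · rw [show (3:ℤ) * ⌊y⌋ = ((3 * ⌊y⌋ : ℤ)) by ring, Int.le_floor]
    push_cast
    nlinarith [Int.floor_le y]
  · rw [Int.floor_lt]
    push_cast
    nlinarith [Int.lt_floor_add_one y]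

lemma tDigit_le_two (x : ℝ) (i : ℕ) : tDigit x i ≤ 2 := by
  unfold tDigit
  split
  · exact le_rfl
  · have h := floor_triple ((3:ℝ) ^ i * x)
    rw [show (3:ℝ) ^ (i+1) * x = 3 * ((3:ℝ) ^ i * x) by ring]
    omega

lemma lCount_succ (x : ℝ) (m : ℕ) :
    lCount x (m + 1) = lCount x m + (if tDigit x m = 1 then 1 else 0) := by
  unfold lCount
  rw [Finset.range_add_one, Finset.filter_insert]
  split
  · rw [Finset.card_insert_of_notMem (by simp)]
  · simp

lemma lCount_le (x : ℝ) (m : ℕ) : lCount x m ≤ m :=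
  le_trans (Finset.card_filter_le _ _) (by simp)

lemma weight_prod (b x : ℝ) (m : ℕ) :
    b ^ (m - lCount x m) * (1 - 2 * b) ^ lCount x m
      = ∏ k ∈ Finset.range m, rDig b (tDigit x k) := by
  induction m with
  | zero => simp [lCount]
  | succ m ih =>
    rw [Finset.prod_range_succ, ← ih, lCount_succ]
    have hle : lCount x m ≤ m := lCount_le x m
    by_cases h : tDigit x m = 1
    · rw [if_pos h, show rDig b (tDigit x m) = 1 - 2*b by rw [h]; rfl]
      rw [show m + 1 - (lCount x m + 1) = m - lCount x m by omega]
      ring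
    · rw [if_neg h, show rDig b (tDigit x m) = b by unfold rDig; rw [if_neg h]]
      rw [add_zero, show m + 1 - lCount x m = (m - lCount x m) + 1 by omega]
      ring

lemma Okamoto_eq (b x : ℝ) : Okamoto b x = ∑' m, okTerm b (tDigit x) m :=
  tsum_congr fun m => by rw [okTerm, ← weight_prod]

/- ## master digit computation -/

lemma floor_master {n j : ℕ} {u : ℝ} (hj : j < 3 ^ n) (hu0 : 0 ≤ u)
    (hu1 : u < ((3:ℝ) ^ n)⁻¹) {i : ℕ} (hi : i ≤ n) :
    ⌊(3:ℝ) ^ i * ((j : ℝ) / 3 ^ n + u)⌋ = (j / 3 ^ (n - i) : ℕ) := by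
  have h3 : (0:ℝ) < (3:ℝ) ^ n := by positivity
  have hKpos : (0:ℝ) < (3:ℝ) ^ (n - i) := by positivity
  have ht0 : 0 ≤ (3:ℝ) ^ n * u := by positivity
  have ht1 : (3:ℝ) ^ n * u < 1 := by
    calc (3:ℝ) ^ n * u < (3:ℝ) ^ n * ((3:ℝ) ^ n)⁻¹ := by
          exact mul_lt_mul_of_pos_left hu1 h3
      _ = 1 := mul_inv_cancel₀ (ne_of_gt h3)
  have hsplit : (3:ℝ) ^ n = (3:ℝ) ^ (n - i) * (3:ℝ) ^ i := by
    rw [← pow_add]; congr 1; omega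
  have key : (3:ℝ) ^ i * ((j : ℝ) / 3 ^ n + u) = ((j : ℝ) + (3:ℝ) ^ n * u) / (3:ℝ) ^ (n - i) := by
    rw [hsplit]
    have hipos : (0:ℝ) < (3:ℝ) ^ i := by positivity
    field_simp
  rw [key]
  have h1 : (j / 3 ^ (n - i)) * 3 ^ (n - i) ≤ j := Nat.div_mul_le_self j _
  have h2 : j + 1 ≤ (j / 3 ^ (n - i) + 1) * 3 ^ (n - i) := by
    have hmod := Nat.div_add_mod j (3 ^ (n - i))
    have hlt : j % 3 ^ (n - i) < 3 ^ (n - i) := Nat.mod_lt _ (Nat.pow_pos (by norm_num))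
    calc j + 1 = 3 ^ (n-i) * (j / 3 ^ (n-i)) + (j % 3 ^ (n-i) + 1) := by omega
      _ ≤ 3 ^ (n-i) * (j / 3 ^ (n-i)) + 3 ^ (n-i) := by omega
      _ = (j / 3 ^ (n - i) + 1) * 3 ^ (n - i) := by ring
  have hl : ((j / 3 ^ (n - i) : ℕ) : ℝ) ≤ ((j:ℝ) + 3^n*u) / 3^(n-i) := by
    rw [le_div_iff₀ hKpos]
    have h1' : ((j / 3 ^ (n - i) : ℕ) : ℝ) * (3:ℝ)^(n-i) ≤ (j:ℝ) := by exact_mod_cast h1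
    linarith
  have hr : ((j:ℝ) + 3^n*u) / 3^(n-i) < ((j / 3 ^ (n - i) : ℕ) : ℝ) + 1 := by
    rw [div_lt_iff₀ hKpos]
    have h2' : (j:ℝ) + 1 ≤ (((j / 3 ^ (n - i) : ℕ) : ℝ) + 1) * (3:ℝ)^(n-i) := by exact_mod_cast h2
    linarith
  rw [Int.floor_eq_iff]
  constructor
  · exact_mod_cast hl
  · exact_mod_cast hr

lemma x_lt_one {n j : ℕ} {u : ℝ} (hj : j < 3 ^ n) (hu1 : u < ((3:ℝ) ^ n)⁻¹) :
    (j : ℝ) / 3 ^ n + u < 1 := by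
  have h3 : (0:ℝ) < (3:ℝ) ^ n := by positivity
  have hjr : (j : ℝ) + 1 ≤ (3:ℝ) ^ n := by exact_mod_cast hj
  have he : (j:ℝ)/3^n + ((3:ℝ)^n)⁻¹ = ((j:ℝ)+1)/3^n := by field_simp
  have : ((j:ℝ)+1)/3^n ≤ 1 := by rw [div_le_one h3]; exact hjr
  linarith

lemma tDigit_master_low {n j : ℕ} {u : ℝ} (hj : j < 3 ^ n) (hu0 : 0 ≤ u)
    (hu1 : u < ((3:ℝ) ^ n)⁻¹) {i : ℕ} (hi : i < n) :
    tDigit ((j : ℝ) / 3 ^ n + u) i = dig n j i := by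
  have hx1 : (j : ℝ) / 3 ^ n + u ≠ 1 := ne_of_lt (x_lt_one hj hu1)
  unfold tDigit
  rw [if_neg hx1]
  rw [floor_master hj hu0 hu1 (by omega : i + 1 ≤ n), floor_master hj hu0 hu1 (le_of_lt hi)]
  have hdd : j / 3 ^ (n - i) = j / 3 ^ (n - (i+1)) / 3 := by
    rw [Nat.div_div_eq_div_mul, ← pow_succ]
    congr 2
    omega
  rw [hdd]
  unfold dig
  have h1 : n - 1 - i = n - (i + 1) := by omega
  rw [h1]
  set A := j / 3 ^ (n - (i+1))
  have := Nat.div_add_mod A 3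
  have h2 : A % 3 < 3 := Nat.mod_lt _ (by norm_num)
  omega

lemma tDigit_master_high {n j : ℕ} {u : ℝ} (hj : j < 3 ^ n) (hu0 : 0 ≤ u)
    (hu1 : u < ((3:ℝ) ^ n)⁻¹) (i : ℕ) :
    tDigit ((j : ℝ) / 3 ^ n + u) (n + i) = tDigit ((3:ℝ) ^ n * u) i := by
  have h3 : (0:ℝ) < (3:ℝ) ^ n := by positivity
  have hx1 : (j : ℝ) / 3 ^ n + u ≠ 1 := ne_of_lt (x_lt_one hj hu1)
  have ht1 : (3:ℝ) ^ n * u ≠ 1 := by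
    have : (3:ℝ) ^ n * u < 1 := by
      calc (3:ℝ) ^ n * u < (3:ℝ) ^ n * ((3:ℝ) ^ n)⁻¹ := mul_lt_mul_of_pos_left hu1 h3
        _ = 1 := mul_inv_cancel₀ (ne_of_gt h3)
    exact ne_of_lt this
  have hfl : ∀ m : ℕ, ⌊(3:ℝ) ^ (n + m) * ((j : ℝ) / 3 ^ n + u)⌋
      = (3:ℤ) ^ m * (j:ℤ) + ⌊(3:ℝ) ^ m * ((3:ℝ) ^ n * u)⌋ := by
    intro m
    have key : (3:ℝ) ^ (n + m) * ((j : ℝ) / 3 ^ n + u)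
        = (3:ℝ) ^ m * ((3:ℝ) ^ n * u) + ((3:ℤ) ^ m * (j:ℤ) : ℤ) := by
      push_cast
      rw [pow_add]
      field_simp
      ring
    rw [key, Int.floor_add_intCast, add_comm]
  unfold tDigit
  rw [if_neg hx1, if_neg ht1]
  rw [show n + i + 1 = n + (i + 1) by ring, hfl (i+1), hfl i]
  have hpow : (3:ℤ) ^ (i + 1) = 3 * 3 ^ i := by ring
  congr 1
  rw [hpow]
  ring

/- ## summability -/

lemma rDig_abs_le {b : ℝ} (hb : b ∈ Set.Ioo (0:ℝ) 1) (e : ℕ) :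
    |rDig b e| ≤ max b |1 - 2 * b| := by
  unfold rDig
  split
  · exact le_max_right _ _
  · rw [abs_of_pos hb.1]; exact le_max_left _ _

lemma qDig_abs_le {b : ℝ} (hb : b ∈ Set.Ioo (0:ℝ) 1) (e : ℕ) : |qDig b e| ≤ 1 := by
  obtain ⟨h0, h1⟩ := hb
  unfold qDig
  split
  · simp
  · split
    · rw [abs_of_pos h0]; linarith
    · rw [abs_of_pos (by linarith)]; linarith

lemma M_lt_one {b : ℝ} (hb : b ∈ Set.Ioo (0:ℝ) 1) : max b |1 - 2 * b| < 1 := by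
  obtain ⟨h0, h1⟩ := hb
  apply max_lt h1
  rw [abs_lt]
  constructor <;> linarith

lemma M_nonneg {b : ℝ} (hb : b ∈ Set.Ioo (0:ℝ) 1) : 0 ≤ max b |1 - 2 * b| :=
  le_trans (le_of_lt hb.1) (le_max_left _ _)

lemma okTerm_abs_le {b : ℝ} (hb : b ∈ Set.Ioo (0:ℝ) 1) (d : ℕ → ℕ) (m : ℕ) :
    |okTerm b d m| ≤ (max b |1 - 2 * b|) ^ m := by
  unfold okTerm
  rw [abs_mul]
  calc |∏ k ∈ Finset.range m, rDig b (d k)| * |qDig b (d m)|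
      ≤ (max b |1 - 2 * b|) ^ m * 1 := by
        apply mul_le_mul _ (qDig_abs_le hb _) (abs_nonneg _) (by positivity)
        rw [Finset.abs_prod]
        calc ∏ k ∈ Finset.range m, |rDig b (d k)|
            ≤ ∏ _k ∈ Finset.range m, max b |1 - 2 * b| :=
              Finset.prod_le_prod (fun _ _ => abs_nonneg _) (fun k _ => rDig_abs_le hb _)
          _ = (max b |1 - 2 * b|) ^ m := by rw [Finset.prod_const, Finset.card_range]
    _ = (max b |1 - 2 * b|) ^ m := mul_one _

lemma okTerm_summable {b : ℝ} (hb : b ∈ Set.Ioo (0:ℝ) 1) (d : ℕ → ℕ) :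
    Summable (okTerm b d) := by
  apply Summable.of_norm
  apply Summable.of_nonneg_of_le (fun _ => norm_nonneg _) (fun m => okTerm_abs_le hb d m)
  exact summable_geometric_of_lt_one (M_nonneg hb) (M_lt_one hb)

lemma osum_split {b : ℝ} (hb : b ∈ Set.Ioo (0:ℝ) 1) (d : ℕ → ℕ) (n : ℕ) :
    ∑' m, okTerm b d m = (∑ m ∈ Finset.range n, okTerm b d m)
      + (∏ k ∈ Finset.range n, rDig b (d k)) * ∑' m, okTerm b (fun i => d (n + i)) m := by
  rw [← Summable.sum_add_tsum_nat_add n (okTerm_summable hb d)]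
  congr 1
  rw [← tsum_mul_left]
  apply tsum_congr
  intro m
  unfold okTerm
  rw [add_comm m n, Finset.prod_range_add]
  simp only [mul_assoc]

lemma Okamoto_zero (b : ℝ) : Okamoto b 0 = 0 := by
  unfold Okamoto
  have : ∀ n : ℕ, tDigit 0 n = 0 := by
    intro n
    unfold tDigit
    rw [if_neg (by norm_num : (0:ℝ) ≠ 1)]
    simp
  rw [tsum_congr (fun n => ?_)]
  · exact tsum_zero
  · rw [this n, show qDig b 0 = 0 from if_pos rfl, mul_zero]

lemma tDigit_one (n : ℕ) : tDigit 1 n = 2 := if_pos rfl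

lemma Okamoto_one {b : ℝ} (hb : b ∈ Set.Ioo (0:ℝ) 1) : Okamoto b 1 = 1 := by
  rw [Okamoto_eq]
  have h : ∀ m : ℕ, okTerm b (tDigit 1) m = b ^ m * (1 - b) := by
    intro m
    unfold okTerm
    simp only [tDigit_one]
    rw [show rDig b 2 = b by rfl, show qDig b 2 = 1 - b by rfl, Finset.prod_const,
      Finset.card_range]
  rw [tsum_congr h, tsum_mul_right, tsum_geometric_of_lt_one (le_of_lt hb.1) hb.2]
  rw [inv_mul_cancel₀ (by intro hc; rw [sub_eq_zero] at hc; exact (ne_of_lt hb.2) hc.symm)]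


/- ## dig arithmetic -/

lemma dig_le_two (n j i : ℕ) : dig n j i ≤ 2 := by
  have : j / 3 ^ (n - 1 - i) % 3 < 3 := Nat.mod_lt _ (by norm_num)
  unfold dig; omega

lemma dig_zero (n j : ℕ) : dig (n + 1) j 0 = j / 3 ^ n % 3 := by
  unfold dig; norm_num

lemma div_mod_pow {e n j : ℕ} (he : e < n) : (j % 3 ^ n) / 3 ^ e % 3 = j / 3 ^ e % 3 := by
  have h1 : j = 3 ^ e * (3 ^ (n - e) * (j / 3 ^ n)) + j % 3 ^ n := by
    rw [← mul_assoc, ← pow_add, show e + (n - e) = n by omega]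
    exact (Nat.div_add_mod j (3 ^ n)).symm
  conv_rhs => rw [h1]
  rw [Nat.mul_add_div (Nat.pow_pos (by norm_num))]
  have h2 : 3 ^ (n - e) * (j / 3 ^ n) = 3 * (3 ^ (n - e - 1) * (j / 3 ^ n)) := by
    rw [← mul_assoc, ← pow_succ']
    congr 2
    omega
  rw [h2, add_comm (3 * _), Nat.add_mul_mod_self_left]

lemma dig_shift {n j i : ℕ} (hi : i < n) : dig (n + 1) j (i + 1) = dig n (j % 3 ^ n) i := by
  unfold dig
  rw [show n + 1 - 1 - (i + 1) = n - 1 - i by omega]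
  rw [div_mod_pow (by omega : n - 1 - i < n)]

lemma dig_compl {n j i : ℕ} (hj : j < 3 ^ n) (hi : i < n) :
    dig n (3 ^ n - 1 - j) i = 2 - dig n j i := by
  set e := n - 1 - i with he_def
  have he : e < n := by omega
  set A := j / 3 ^ e with hA_def
  set s := j % 3 ^ e with hs_def
  have hjd : j = 3 ^ e * A + s := (Nat.div_add_mod j (3 ^ e)).symm
  have hs : s < 3 ^ e := Nat.mod_lt _ (Nat.pow_pos (by norm_num))
  have hpow : 3 ^ e * 3 ^ (n - e) = 3 ^ n := by rw [← pow_add]; congr 1; omega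
  have hA : A < 3 ^ (n - e) := by
    rw [hA_def, Nat.div_lt_iff_lt_mul (Nat.pow_pos (by norm_num))]
    calc j < 3 ^ n := hj
      _ = 3 ^ (n - e) * 3 ^ e := by rw [← pow_add]; congr 1; omega
  set B := A / 3 with hB_def
  set c := A % 3 with hc_def
  have hAd : A = 3 * B + c := (Nat.div_add_mod A 3).symm
  have hc : c < 3 := Nat.mod_lt _ (by norm_num)
  have hpow2 : 3 * 3 ^ (n - e - 1) = 3 ^ (n - e) := by rw [← pow_succ']; congr 1; omega
  have hB : B < 3 ^ (n - e - 1) := by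
    rw [hB_def, Nat.div_lt_iff_lt_mul (by norm_num)]
    calc A < 3 ^ (n - e) := hA
      _ = 3 ^ (n - e - 1) * 3 := by rw [← hpow2]; ring
  -- step 1 : the key ℕ decomposition
  have p1 : 0 < 3 ^ n := Nat.pow_pos (by norm_num)
  have p2 : 0 < 3 ^ (n - e) := Nat.pow_pos (by norm_num)
  have p3 : 0 < 3 ^ e := Nat.pow_pos (by norm_num)
  have p4 : 0 < 3 ^ (n - e - 1) := Nat.pow_pos (by norm_num)
  have hjdz : (j:ℤ) = 3 ^ e * A + s := by exact_mod_cast hjd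
  have hpowz : (3:ℤ) ^ e * 3 ^ (n - e) = 3 ^ n := by exact_mod_cast hpow
  have key : 3 ^ n - 1 - j = 3 ^ e * (3 ^ (n - e) - 1 - A) + (3 ^ e - 1 - s) := by
    zify [show 1 ≤ 3 ^ n by omega, show j ≤ 3 ^ n - 1 by omega,
      show 1 ≤ 3 ^ (n - e) by omega, show A ≤ 3 ^ (n - e) - 1 by omega,
      show 1 ≤ 3 ^ e by omega, show s ≤ 3 ^ e - 1 by omega]
    linear_combination -hjdz - hpowz
  have step1 : (3 ^ n - 1 - j) / 3 ^ e = 3 ^ (n - e) - 1 - A := by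
    rw [key, Nat.mul_add_div (Nat.pow_pos (by norm_num)),
      Nat.div_eq_of_lt (by omega), add_zero]
  -- step 2 : mod 3
  have hAdz : (A:ℤ) = 3 * B + c := by exact_mod_cast hAd
  have hpow2z : (3:ℤ) * 3 ^ (n - e - 1) = 3 ^ (n - e) := by exact_mod_cast hpow2
  have key2 : 3 ^ (n - e) - 1 - A = 3 * (3 ^ (n - e - 1) - 1 - B) + (2 - c) := by
    zify [show 1 ≤ 3 ^ (n - e) by omega, show A ≤ 3 ^ (n - e) - 1 by omega,
      show 1 ≤ 3 ^ (n - e - 1) by omega, show B ≤ 3 ^ (n - e - 1) - 1 by omega,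
      show c ≤ 2 by omega]
    linear_combination -hAdz - hpow2z
  have step2 : (3 ^ (n - e) - 1 - A) % 3 = 2 - c := by
    rw [key2, Nat.mul_add_mod, Nat.mod_eq_of_lt (by omega)]
  show (3 ^ n - 1 - j) / 3 ^ e % 3 = 2 - j / 3 ^ e % 3
  rw [step1, step2]

/- ## FS / Wt recursions -/

lemma FS_zero (b : ℝ) (n : ℕ) : FS b n 0 = 0 := by
  unfold FS
  apply Finset.sum_eq_zero
  intro i _
  have : dig n 0 i = 0 := by unfold dig; simp
  rw [this, show qDig b 0 = 0 from if_pos rfl, mul_zero]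

lemma Wt_rec (b : ℝ) (n j : ℕ) :
    Wt b (n + 1) j = rDig b (j / 3 ^ n % 3) * Wt b n (j % 3 ^ n) := by
  unfold Wt
  rw [Finset.prod_range_succ']
  rw [dig_zero, mul_comm]
  congr 1
  apply Finset.prod_congr rfl
  intro k hk
  have hk' := Finset.mem_range.mp hk
  rw [dig_shift hk']

lemma FS_rec (b : ℝ) (n j : ℕ) :
    FS b (n + 1) j = qDig b (j / 3 ^ n % 3) + rDig b (j / 3 ^ n % 3) * FS b n (j % 3 ^ n) := by
  unfold FS
  rw [Finset.sum_range_succ']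
  have h0 : (∏ k ∈ Finset.range 0, rDig b (dig (n+1) j k)) * qDig b (dig (n + 1) j 0)
      = qDig b (j / 3 ^ n % 3) := by
    rw [Finset.prod_range_zero, one_mul, dig_zero]
  rw [h0, add_comm]
  congr 1
  rw [Finset.mul_sum]
  apply Finset.sum_congr rfl
  intro i hi
  have hi' : i < n := Finset.mem_range.mp hi
  rw [Finset.prod_range_succ', dig_zero, dig_shift hi']
  have : ∀ k ∈ Finset.range i, rDig b (dig (n + 1) j (k + 1)) = rDig b (dig n (j % 3 ^ n) k) := by
    intro k hk
    have hk' := Finset.mem_range.mp hk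
    rw [dig_shift (by omega : k < n)]
  rw [Finset.prod_congr rfl this]
  ring

lemma Wt_full (b : ℝ) (n : ℕ) : Wt b n (3 ^ n - 1) = b ^ n := by
  unfold Wt
  have hd : ∀ i ∈ Finset.range n, rDig b (dig n (3 ^ n - 1) i) = b := by
    intro i hi
    have h := dig_compl (Nat.pow_pos (n := n) (by norm_num) : 0 < 3 ^ n)
      (Finset.mem_range.mp hi)
    have h0 : dig n 0 i = 0 := by unfold dig; simp
    rw [show 3 ^ n - 1 - 0 = 3 ^ n - 1 by omega, h0] at h
    rw [h]; rfl
  rw [Finset.prod_congr rfl hd, Finset.prod_const, Finset.card_range]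

lemma FS_full (b : ℝ) (n : ℕ) : FS b n (3 ^ n - 1) + Wt b n (3 ^ n - 1) = 1 := by
  have hd : ∀ i, i < n → dig n (3 ^ n - 1) i = 2 := by
    intro i hi
    have h := dig_compl (Nat.pow_pos (n := n) (by norm_num) : 0 < 3 ^ n) hi
    have h0 : dig n 0 i = 0 := by unfold dig; simp
    rw [show 3 ^ n - 1 - 0 = 3 ^ n - 1 by omega, h0] at h
    rw [h]
  have hFS : FS b n (3 ^ n - 1) = ∑ i ∈ Finset.range n, (b ^ i - b ^ (i + 1)) := by
    unfold FS
    apply Finset.sum_congr rfl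
    intro i hi
    have hi' : i < n := Finset.mem_range.mp hi
    have hprod : (∏ k ∈ Finset.range i, rDig b (dig n (3 ^ n - 1) k)) = b ^ i := by
      have : ∀ k ∈ Finset.range i, rDig b (dig n (3 ^ n - 1) k) = b := by
        intro k hk
        have hk' := Finset.mem_range.mp hk
        rw [hd k (by omega)]; rfl
      rw [Finset.prod_congr rfl this, Finset.prod_const, Finset.card_range]
    rw [hprod, hd i hi', show qDig b 2 = 1 - b by rfl]
    ring
  rw [hFS, Finset.sum_range_sub' (fun i => b ^ i), Wt_full]
  ring

lemma FS_succ (b : ℝ) : ∀ n j, j + 1 < 3 ^ n → FS b n (j + 1) = FS b n j + Wt b n j := by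
  intro n
  induction n with
  | zero => intro j h; simp at h
  | succ n ih =>
    intro j h
    have h3n : 0 < 3 ^ n := Nat.pow_pos (by norm_num)
    have hdm := Nat.div_add_mod j (3 ^ n)
    have hj' : j % 3 ^ n < 3 ^ n := Nat.mod_lt _ h3n
    have hd : j / 3 ^ n ≤ 2 := by
      have : j / 3 ^ n < 3 := by
        rw [Nat.div_lt_iff_lt_mul h3n]
        calc j < 3 ^ (n + 1) := by omega
          _ = 3 * 3 ^ n := by ring
        ;
      omega
    by_cases hc : j % 3 ^ n + 1 < 3 ^ n
    · have e1 : (j + 1) / 3 ^ n = j / 3 ^ n := by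
        rw [show j + 1 = 3 ^ n * (j / 3 ^ n) + (j % 3 ^ n + 1) by omega,
          Nat.mul_add_div h3n, Nat.div_eq_of_lt hc, add_zero]
      have e2 : (j + 1) % 3 ^ n = j % 3 ^ n + 1 := by
        conv_lhs => rw [show j + 1 = 3 ^ n * (j / 3 ^ n) + (j % 3 ^ n + 1) by omega]
        rw [Nat.mul_add_mod, Nat.mod_eq_of_lt hc]
      rw [FS_rec, FS_rec, Wt_rec, e1, e2, ih _ hc]
      ring
    · have hj1 : j % 3 ^ n = 3 ^ n - 1 := by omega
      have hfull : j + 1 = (j / 3 ^ n + 1) * 3 ^ n := by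
        have : (j / 3 ^ n + 1) * 3 ^ n = 3 ^ n * (j / 3 ^ n) + 3 ^ n := by ring
        omega
      have hd2 : j / 3 ^ n + 1 ≤ 2 := by
        by_contra hcon
        have hd22 : j / 3 ^ n = 2 := by omega
        rw [hfull, hd22] at h
        have : 3 ^ (n + 1) = 3 * 3 ^ n := by ring
        omega
      have e1 : (j + 1) / 3 ^ n = j / 3 ^ n + 1 := by
        rw [hfull, Nat.mul_div_cancel _ h3n]
      have e2 : (j + 1) % 3 ^ n = 0 := by
        rw [hfull, Nat.mul_mod_left]
      rw [FS_rec, FS_rec, Wt_rec, e1, e2, FS_zero, hj1]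
      have hfs := FS_full b n
      have hwt := Wt_full b n
      interval_cases hdval : j / 3 ^ n
      · norm_num [qDig, rDig]
        linear_combination (-b) * hfs
      · norm_num [qDig, rDig]
        linear_combination (2 * b - 1) * hfs
      · omega

/- ## complement identities -/

lemma rDig_compl {b : ℝ} {e : ℕ} (he : e ≤ 2) : rDig b (2 - e) = rDig b e := by
  interval_cases e <;> rfl

lemma qDig_add_compl {b : ℝ} {e : ℕ} (he : e ≤ 2) :
    qDig b e + qDig b (2 - e) = 1 - rDig b e := by
  interval_cases e <;> simp [qDig, rDig] <;> ring

lemma Wt_compl (b : ℝ) {n j : ℕ} (hj : j < 3 ^ n) : Wt b n (3 ^ n - 1 - j) = Wt b n j := by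
  unfold Wt
  apply Finset.prod_congr rfl
  intro k hk
  rw [dig_compl hj (Finset.mem_range.mp hk), rDig_compl (dig_le_two n j k)]

lemma FS_compl (b : ℝ) {n j : ℕ} (hj : j < 3 ^ n) :
    FS b n j + FS b n (3 ^ n - 1 - j) = 1 - Wt b n j := by
  unfold FS
  rw [← Finset.sum_add_distrib]
  have : ∀ i ∈ Finset.range n,
      (∏ k ∈ Finset.range i, rDig b (dig n j k)) * qDig b (dig n j i)
        + (∏ k ∈ Finset.range i, rDig b (dig n (3 ^ n - 1 - j) k)) * qDig b (dig n (3 ^ n - 1 - j) i)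
      = (∏ k ∈ Finset.range i, rDig b (dig n j k))
        - (∏ k ∈ Finset.range (i + 1), rDig b (dig n j k)) := by
    intro i hi
    have hi' : i < n := Finset.mem_range.mp hi
    have hp : (∏ k ∈ Finset.range i, rDig b (dig n (3 ^ n - 1 - j) k))
        = ∏ k ∈ Finset.range i, rDig b (dig n j k) := by
      apply Finset.prod_congr rfl
      intro k hk
      have hk' := Finset.mem_range.mp hk
      rw [dig_compl hj (by omega : k < n), rDig_compl (dig_le_two n j k)]
    rw [hp, dig_compl hj hi', ← mul_add, qDig_add_compl (dig_le_two n j i),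
      Finset.prod_range_succ]
    ring
  rw [Finset.sum_congr rfl this, Finset.sum_range_sub' (fun i => ∏ k ∈ Finset.range i, rDig b (dig n j k))]
  unfold Wt
  simp


lemma Okamoto_affine {b : ℝ} (hb : b ∈ Set.Ioo (0:ℝ) 1) {n j : ℕ} {u : ℝ} (hj : j < 3 ^ n)
    (hu0 : 0 ≤ u) (hu1 : u < ((3:ℝ) ^ n)⁻¹) :
    Okamoto b ((j : ℝ) / 3 ^ n + u)
      = FS b n j + Wt b n j * Okamoto b ((3:ℝ) ^ n * u) := by
  rw [Okamoto_eq, Okamoto_eq, osum_split hb _ n]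
  congr 1
  · unfold FS
    apply Finset.sum_congr rfl
    intro i hi
    have hi' : i < n := Finset.mem_range.mp hi
    unfold okTerm
    congr 1
    · apply Finset.prod_congr rfl
      intro k hk
      have hk' := Finset.mem_range.mp hk
      rw [tDigit_master_low hj hu0 hu1 (by omega : k < n)]
    · rw [tDigit_master_low hj hu0 hu1 hi']
  · congr 1
    · unfold Wt
      apply Finset.prod_congr rfl
      intro k hk
      have hk' := Finset.mem_range.mp hk
      rw [tDigit_master_low hj hu0 hu1 hk']
    · apply tsum_congr
      intro m
      have hfun : (fun i => tDigit ((j : ℝ) / 3 ^ n + u) (n + i)) = tDigit ((3:ℝ) ^ n * u) :=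
        funext (tDigit_master_high hj hu0 hu1)
      rw [hfun]

lemma Okamoto_rat {b : ℝ} (hb : b ∈ Set.Ioo (0:ℝ) 1) {n j : ℕ} (hj : j < 3 ^ n) :
    Okamoto b ((j : ℝ) / 3 ^ n) = FS b n j := by
  have h3 : (0:ℝ) < ((3:ℝ) ^ n)⁻¹ := by positivity
  have := Okamoto_affine hb hj (le_refl 0) h3
  rw [add_zero, mul_zero, Okamoto_zero, mul_zero, add_zero] at this
  exact this

lemma Okamoto_right {b : ℝ} (hb : b ∈ Set.Ioo (0:ℝ) 1) {n j : ℕ} (hj : j < 3 ^ n) :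
    Okamoto b (((j : ℝ) + 1) / 3 ^ n) = FS b n j + Wt b n j := by
  by_cases hc : j + 1 < 3 ^ n
  · have hcast : ((j : ℝ) + 1) = ((j + 1 : ℕ) : ℝ) := by push_cast; ring
    rw [hcast, Okamoto_rat hb hc, FS_succ b n j hc]
  · have hj1 : j + 1 = 3 ^ n := by omega
    have hcast : ((j : ℝ) + 1) / 3 ^ n = 1 := by
      have : ((j : ℝ) + 1) = (3:ℝ) ^ n := by exact_mod_cast hj1
      rw [this]
      exact div_self (by positivity)
    rw [hcast, Okamoto_one hb]
    have hj2 : j = 3 ^ n - 1 := by omega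
    rw [hj2, FS_full b n]

/- ## nonterminating complement digits -/

lemma tDigit_compl {t : ℝ} (ht0 : 0 < t) (ht1 : t < 1)
    (hInt : ∀ i : ℕ, ((⌊(3:ℝ) ^ i * t⌋ : ℝ)) ≠ (3:ℝ) ^ i * t) (i : ℕ) :
    tDigit (1 - t) i = 2 - tDigit t i := by
  have hfl : ∀ m : ℕ, ⌊(3:ℝ) ^ m * (1 - t)⌋ = 3 ^ m - ⌊(3:ℝ) ^ m * t⌋ - 1 := by
    intro m
    have h1 : ((⌊(3:ℝ) ^ m * t⌋ : ℝ)) < (3:ℝ) ^ m * t :=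
      lt_of_le_of_ne (Int.floor_le _) (hInt m)
    have h2 : (3:ℝ) ^ m * t < (⌊(3:ℝ) ^ m * t⌋ : ℝ) + 1 := Int.lt_floor_add_one _
    rw [Int.floor_eq_iff]
    push_cast
    constructor
    · nlinarith
    · nlinarith
  have hne1 : (1:ℝ) - t ≠ 1 := by intro hcon; apply ne_of_gt ht0; linarith
  have hne2 : t ≠ 1 := ne_of_lt ht1
  unfold tDigit
  rw [if_neg hne1, if_neg hne2, hfl (i + 1), hfl i]
  have hd := floor_triple ((3:ℝ) ^ i * t)
  rw [show (3:ℝ) * ((3:ℝ) ^ i * t) = (3:ℝ) ^ (i + 1) * t by ring] at hd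
  have hpow : (3:ℤ) ^ (i + 1) = 3 * 3 ^ i := by ring
  omega

/- ## the symmetry O(t) + O(1-t) = 1 -/

lemma Okamoto_symm_nonterm {b : ℝ} (hb : b ∈ Set.Ioo (0:ℝ) 1) {t : ℝ} (ht0 : 0 < t)
    (ht1 : t < 1) (hInt : ∀ i : ℕ, ((⌊(3:ℝ) ^ i * t⌋ : ℝ)) ≠ (3:ℝ) ^ i * t) :
    Okamoto b t + Okamoto b (1 - t) = 1 := by
  rw [Okamoto_eq, Okamoto_eq]
  set P : ℕ → ℝ := fun m => ∏ k ∈ Finset.range m, rDig b (tDigit t k) with hP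
  have hcompl := tDigit_compl ht0 ht1 hInt
  have hle := tDigit_le_two t
  have hterm : ∀ m, okTerm b (tDigit t) m + okTerm b (tDigit (1 - t)) m = P m - P (m + 1) := by
    intro m
    unfold okTerm
    have hP' : (∏ k ∈ Finset.range m, rDig b (tDigit (1 - t) k)) = P m := by
      apply Finset.prod_congr rfl
      intro k _
      rw [hcompl k, rDig_compl (hle k)]
    rw [hP', hcompl m, ← mul_add, qDig_add_compl (hle m)]
    rw [hP]
    simp only
    rw [Finset.prod_range_succ]
    ring
  have hs1 := okTerm_summable hb (tDigit t)
  have hs2 := okTerm_summable hb (tDigit (1 - t))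
  have hsum := hs1.add hs2
  have h1 : Tendsto (fun N => ∑ m ∈ Finset.range N,
      (okTerm b (tDigit t) m + okTerm b (tDigit (1 - t)) m)) atTop
      (𝓝 (∑' m, (okTerm b (tDigit t) m + okTerm b (tDigit (1 - t)) m))) :=
    hsum.hasSum.tendsto_sum_nat
  have hPlim : Tendsto P atTop (𝓝 0) := by
    apply squeeze_zero_norm (a := fun m => (max b |1 - 2 * b|) ^ m)
    · intro m
      rw [hP]
      simp only [Real.norm_eq_abs]
      rw [Finset.abs_prod]
      calc ∏ k ∈ Finset.range m, |rDig b (tDigit t k)|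
          ≤ ∏ _k ∈ Finset.range m, max b |1 - 2 * b| :=
            Finset.prod_le_prod (fun _ _ => abs_nonneg _) (fun k _ => rDig_abs_le hb _)
        _ = (max b |1 - 2 * b|) ^ m := by rw [Finset.prod_const, Finset.card_range]
    · exact tendsto_pow_atTop_nhds_zero_of_lt_one (M_nonneg hb) (M_lt_one hb)
  have h2 : Tendsto (fun N => ∑ m ∈ Finset.range N,
      (okTerm b (tDigit t) m + okTerm b (tDigit (1 - t)) m)) atTop (𝓝 1) := by
    have he : ∀ N, ∑ m ∈ Finset.range N,
        (okTerm b (tDigit t) m + okTerm b (tDigit (1 - t)) m) = 1 - P N := by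
      intro N
      rw [Finset.sum_congr rfl (fun m _ => hterm m), Finset.sum_range_sub' P]
      have : P 0 = 1 := by rw [hP]; simp
      rw [this]
    have hfe : (fun N => ∑ m ∈ Finset.range N,
        (okTerm b (tDigit t) m + okTerm b (tDigit (1 - t)) m)) = fun N => 1 - P N := funext he
    rw [hfe]
    simpa using tendsto_const_nhds.sub hPlim
  have := tendsto_nhds_unique h1 h2
  rw [← Summable.tsum_add hs1 hs2]
  exact this

lemma Okamoto_symm {b : ℝ} (hb : b ∈ Set.Ioo (0:ℝ) 1) {t : ℝ} (ht : t ∈ Set.Icc (0:ℝ) 1) :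
    Okamoto b t + Okamoto b (1 - t) = 1 := by
  obtain ⟨ht0, ht1⟩ := ht
  rcases eq_or_lt_of_le ht0 with h0 | h0
  · rw [← h0, Okamoto_zero, sub_zero, Okamoto_one hb]; ring
  rcases eq_or_lt_of_le ht1 with h1 | h1
  · rw [h1, Okamoto_one hb, sub_self, Okamoto_zero]; ring
  by_cases hterm : ∃ m : ℕ, ∃ q : ℕ, q < 3 ^ m ∧ t = (q : ℝ) / 3 ^ m
  · obtain ⟨m, q, hq, rfl⟩ := hterm
    have h3m : (0:ℝ) < (3:ℝ) ^ m := by positivity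
    have hq1 : 1 ≤ q := by
      by_contra hcon
      have : q = 0 := by omega
      rw [this] at h0
      norm_num at h0
    have hsub : 1 - (q : ℝ) / 3 ^ m = ((3 ^ m - q : ℕ) : ℝ) / 3 ^ m := by
      rw [Nat.cast_sub (le_of_lt hq)]
      push_cast
      field_simp
    have hq2 : 3 ^ m - q < 3 ^ m := by omega
    rw [Okamoto_rat hb hq, hsub, Okamoto_rat hb hq2]
    have he : 3 ^ m - q = (3 ^ m - 1 - q) + 1 := by omega
    have hlt : (3 ^ m - 1 - q) + 1 < 3 ^ m := by omega
    rw [he, FS_succ b m _ hlt]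
    have h1c := FS_compl b hq
    have h2c := Wt_compl b hq
    linarith
  · push_neg at hterm
    apply Okamoto_symm_nonterm hb h0 h1
    intro i hcon
    have h3i : (0:ℝ) < (3:ℝ) ^ i := by positivity
    have hfl0 : 0 ≤ ⌊(3:ℝ) ^ i * t⌋ := by
      apply Int.floor_nonneg.mpr
      positivity
    set z := ⌊(3:ℝ) ^ i * t⌋ with hz
    have hzlt : (z : ℝ) < (3:ℝ) ^ i := by
      rw [hcon]
      calc (3:ℝ) ^ i * t < (3:ℝ) ^ i * 1 := by
            exact mul_lt_mul_of_pos_left h1 h3i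
        _ = (3:ℝ) ^ i := mul_one _
    have hzr : ((z.toNat : ℕ) : ℝ) = (z : ℝ) := by
      have h := Int.toNat_of_nonneg hfl0
      exact_mod_cast congrArg (fun w : ℤ => (w : ℝ)) h
    have hzn : z.toNat < 3 ^ i := by
      have h' : ((z.toNat : ℕ) : ℝ) < (3:ℝ) ^ i := by rw [hzr]; exact hzlt
      exact_mod_cast h'
    apply hterm i z.toNat hzn
    rw [eq_div_iff (ne_of_gt h3i), hzr, hcon]
    ring


/- ## polynomial coefficients of the partial products -/

noncomputable def cw (a : ℝ) (d : ℕ → ℕ) : ℕ → ℕ → ℝ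
  | 0, 0 => 1
  | 0, _ + 1 => 0
  | m + 1, i =>
      rDig a (d m) * cw a d m i
        + (if d m = 1 then (-2:ℝ) else 1) * (if i = 0 then 0 else cw a d m (i - 1))

noncomputable def gam (e : ℕ) : ℝ := if e = 0 then 0 else if e = 1 then 1 else -1

noncomputable def cT (a : ℝ) (d : ℕ → ℕ) (m i : ℕ) : ℝ :=
  qDig a (d m) * cw a d m i + gam (d m) * (if i = 0 then 0 else cw a d m (i - 1))

lemma rDig_eval (a h : ℝ) (e : ℕ) :
    rDig (a + h) e = rDig a e + (if e = 1 then (-2:ℝ) else 1) * h := by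
  unfold rDig; split <;> ring

lemma qDig_eval (a h : ℝ) (e : ℕ) : qDig (a + h) e = qDig a e + gam e * h := by
  unfold qDig gam
  split
  · simp
  · split <;> ring

lemma cw_zero_of_gt (a : ℝ) (d : ℕ → ℕ) : ∀ m i, m < i → cw a d m i = 0 := by
  intro m
  induction m with
  | zero => intro i hi; match i, hi with | i + 1, _ => rfl
  | succ m ih =>
    intro i hi
    show rDig a (d m) * cw a d m i + _ * (if i = 0 then 0 else cw a d m (i - 1)) = 0
    rw [ih i (by omega), if_neg (by omega : ¬ i = 0), ih (i - 1) (by omega)]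
    ring

lemma sum_mul_affine (c : ℕ → ℝ) (α β h : ℝ) (m : ℕ) (hc : c (m + 1) = 0) :
    (∑ i ∈ Finset.range (m + 1), c i * h ^ i) * (α + β * h)
      = ∑ i ∈ Finset.range (m + 2),
          (α * c i + β * (if i = 0 then 0 else c (i - 1))) * h ^ i := by
  have e1 : ∀ i ∈ Finset.range (m + 2),
      (α * c i + β * (if i = 0 then 0 else c (i - 1))) * h ^ i
        = α * (c i * h ^ i) + β * ((if i = 0 then 0 else c (i - 1)) * h ^ i) := by
    intro i _; ring
  rw [Finset.sum_congr rfl e1, Finset.sum_add_distrib, ← Finset.mul_sum, ← Finset.mul_sum]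
  rw [Finset.sum_range_succ (fun i => c i * h ^ i) (m + 1), hc]
  rw [Finset.sum_range_succ' (fun i => (if i = 0 then (0:ℝ) else c (i - 1)) * h ^ i) (m + 1)]
  simp only [Nat.succ_ne_zero, if_false, Nat.add_sub_cancel, if_true, ite_true, zero_mul,
    mul_zero, add_zero, pow_zero, mul_one]
  have e2 : ∀ i ∈ Finset.range (m + 1), c i * h ^ (i + 1) = h * (c i * h ^ i) := by
    intro i _; ring
  rw [Finset.sum_congr rfl e2, ← Finset.mul_sum]
  ring

lemma cw_eval (a : ℝ) (d : ℕ → ℕ) (m : ℕ) (h : ℝ) :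
    ∏ k ∈ Finset.range m, rDig (a + h) (d k)
      = ∑ i ∈ Finset.range (m + 1), cw a d m i * h ^ i := by
  induction m with
  | zero => simp [cw]
  | succ m ih =>
    rw [Finset.prod_range_succ, ih, rDig_eval]
    rw [sum_mul_affine (cw a d m) _ _ h m (cw_zero_of_gt a d m (m + 1) (by omega))]
    apply Finset.sum_congr rfl
    intro i _
    rfl

lemma cT_eval (a : ℝ) (d : ℕ → ℕ) (m : ℕ) (h : ℝ) :
    okTerm (a + h) d m = ∑ i ∈ Finset.range (m + 2), cT a d m i * h ^ i := by
  unfold okTerm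
  rw [cw_eval, qDig_eval]
  rw [sum_mul_affine (cw a d m) _ _ h m (cw_zero_of_gt a d m (m + 1) (by omega))]
  apply Finset.sum_congr rfl
  intro i _
  rfl

lemma cT_zero_of_gt (a : ℝ) (d : ℕ → ℕ) {m i : ℕ} (hi : m + 1 < i) : cT a d m i = 0 := by
  unfold cT
  rw [cw_zero_of_gt a d m i (by omega), if_neg (by omega : ¬ i = 0),
    cw_zero_of_gt a d m (i - 1) (by omega)]
  ring

/- ## coefficient bounds -/

lemma pow_sub_le_pow_sub {M : ℝ} (h0 : 0 ≤ M) (h1 : M ≤ 1) {p q : ℕ} (h : q ≤ p) :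
    M ^ p ≤ M ^ q :=
  pow_le_pow_of_le_one h0 h1 h

lemma cw_bound {a : ℝ} (ha : a ∈ Set.Ioo (0:ℝ) 1) (d : ℕ → ℕ) :
    ∀ m i, |cw a d m i| ≤ (m.choose i : ℝ) * 2 ^ i * (max a |1 - 2 * a|) ^ (m - i) := by
  set M := max a |1 - 2 * a| with hM
  have hM0 : 0 < M := lt_of_lt_of_le ha.1 (le_max_left _ _)
  have hM1 : M < 1 := M_lt_one ha
  intro m
  induction m with
  | zero =>
    intro i
    match i with
    | 0 => norm_num [cw]
    | i + 1 => norm_num [cw, Nat.choose]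
  | succ m ih =>
    intro i
    have hr : |rDig a (d m)| ≤ M := rDig_abs_le ha _
    have hβ : |(if d m = 1 then (-2:ℝ) else 1)| ≤ 2 := by split <;> norm_num
    have habs : |cw a d (m + 1) i|
        ≤ M * |cw a d m i| + 2 * |(if i = 0 then (0:ℝ) else cw a d m (i - 1))| := by
      show |rDig a (d m) * cw a d m i + _ * _| ≤ _
      calc |rDig a (d m) * cw a d m i + _ * _|
          ≤ |rDig a (d m) * cw a d m i| + |(if d m = 1 then (-2:ℝ) else 1) * (if i = 0 then (0:ℝ) else cw a d m (i - 1))| := abs_add_le _ _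
        _ ≤ M * |cw a d m i| + 2 * |(if i = 0 then (0:ℝ) else cw a d m (i - 1))| := by
            rw [abs_mul, abs_mul]
            gcongr
    match i with
    | 0 =>
      norm_num at habs
      calc |cw a d (m+1) 0| ≤ M * |cw a d m 0| := habs
        _ ≤ M * ((m.choose 0 : ℝ) * 2 ^ 0 * M ^ (m - 0)) := by
            apply mul_le_mul_of_nonneg_left (ih 0) hM0.le
        _ = ((m+1).choose 0 : ℝ) * 2 ^ 0 * M ^ (m + 1 - 0) := by
            simp [pow_succ]
            ring
    | i + 1 =>
      norm_num at habs
      have h1 : M * |cw a d m (i+1)| ≤ (m.choose (i+1) : ℝ) * 2 ^ (i+1) * (M * M ^ (m - (i+1))) := by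
        calc M * |cw a d m (i+1)| ≤ M * ((m.choose (i+1) : ℝ) * 2 ^ (i+1) * M ^ (m - (i+1))) :=
              mul_le_mul_of_nonneg_left (ih (i+1)) hM0.le
          _ = (m.choose (i+1) : ℝ) * 2 ^ (i+1) * (M * M ^ (m - (i+1))) := by ring
      have hMM : M * M ^ (m - (i+1)) ≤ M ^ (m - i) := by
        by_cases hcase : i < m
        · rw [show m - i = (m - (i+1)) + 1 by omega, pow_succ]
          exact le_of_eq (by ring)
        · rw [show m - (i+1) = 0 by omega, show m - i = 0 by omega]
          simpa using hM1.le
      have h2 : 2 * |cw a d m i| ≤ (m.choose i : ℝ) * 2 ^ (i+1) * M ^ (m - i) := by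
        calc 2 * |cw a d m i| ≤ 2 * ((m.choose i : ℝ) * 2 ^ i * M ^ (m - i)) :=
              mul_le_mul_of_nonneg_left (ih i) (by norm_num)
          _ = (m.choose i : ℝ) * 2 ^ (i+1) * M ^ (m - i) := by ring
      calc |cw a d (m+1) (i+1)| ≤ M * |cw a d m (i+1)| + 2 * |cw a d m i| := habs
        _ ≤ (m.choose (i+1) : ℝ) * 2 ^ (i+1) * (M * M ^ (m - (i+1)))
            + (m.choose i : ℝ) * 2 ^ (i+1) * M ^ (m - i) := add_le_add h1 h2
        _ ≤ (m.choose (i+1) : ℝ) * 2 ^ (i+1) * M ^ (m - i)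
            + (m.choose i : ℝ) * 2 ^ (i+1) * M ^ (m - i) := by
              gcongr
        _ = (((m+1).choose (i+1) : ℕ) : ℝ) * 2 ^ (i+1) * M ^ (m + 1 - (i+1)) := by
              rw [Nat.choose_succ_succ m i]
              push_cast
              ring

lemma cT_bound {a : ℝ} (ha : a ∈ Set.Ioo (0:ℝ) 1) (d : ℕ → ℕ) (m i : ℕ) :
    |cT a d m i| ≤ ((m+1).choose i : ℝ) * 2 ^ i * (max a |1 - 2 * a|) ^ (m - i) := by
  set M := max a |1 - 2 * a| with hM
  have hM0 : 0 < M := lt_of_lt_of_le ha.1 (le_max_left _ _)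
  have hM1 : M < 1 := M_lt_one ha
  have hq : |qDig a (d m)| ≤ 1 := qDig_abs_le ha _
  have hγ : |gam (d m)| ≤ 1 := by
    unfold gam
    split
    · norm_num
    · split <;> norm_num
  have habs : |cT a d m i| ≤ |cw a d m i| + |(if i = 0 then (0:ℝ) else cw a d m (i - 1))| := by
    unfold cT
    have h1 := abs_add_le (qDig a (d m) * cw a d m i)
      (gam (d m) * (if i = 0 then (0:ℝ) else cw a d m (i - 1)))
    rw [abs_mul, abs_mul] at h1
    nlinarith [abs_nonneg (cw a d m i), abs_nonneg ((if i = 0 then (0:ℝ) else cw a d m (i - 1))),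
      hq, hγ, abs_nonneg (qDig a (d m)), abs_nonneg (gam (d m))]
  match i with
  | 0 =>
    norm_num at habs
    calc |cT a d m 0| ≤ |cw a d m 0| := habs
      _ ≤ (m.choose 0 : ℝ) * 2 ^ 0 * M ^ (m - 0) := cw_bound ha d m 0
      _ = ((m+1).choose 0 : ℝ) * 2 ^ 0 * M ^ (m - 0) := by simp
  | i + 1 =>
    norm_num at habs
    have h1 := cw_bound ha d m (i+1)
    have h2 : |cw a d m i| ≤ (m.choose i : ℝ) * 2 ^ (i+1) * M ^ (m - (i+1)) := by
      calc |cw a d m i| ≤ (m.choose i : ℝ) * 2 ^ i * M ^ (m - i) := cw_bound ha d m i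
        _ ≤ (m.choose i : ℝ) * 2 ^ (i+1) * M ^ (m - (i+1)) := by
            apply mul_le_mul
            · apply mul_le_mul_of_nonneg_left _ (by positivity)
              exact pow_le_pow_right₀ (by norm_num) (by omega)
            · exact pow_sub_le_pow_sub hM0.le hM1.le (by omega)
            · positivity
            · positivity
    calc |cT a d m (i+1)| ≤ |cw a d m (i+1)| + |cw a d m i| := habs
      _ ≤ (m.choose (i+1) : ℝ) * 2 ^ (i+1) * M ^ (m - (i+1))
          + (m.choose i : ℝ) * 2 ^ (i+1) * M ^ (m - (i+1)) := add_le_add h1 h2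
      _ = (((m+1).choose (i+1) : ℕ) : ℝ) * 2 ^ (i+1) * M ^ (m - (i+1)) := by
          rw [Nat.choose_succ_succ m i]
          push_cast
          ring

/- ## analyticity of b ↦ Okamoto b t -/

lemma okamoto_analyticAt {a : ℝ} (ha : a ∈ Set.Ioo (0:ℝ) 1) (t : ℝ) :
    AnalyticAt ℝ (fun b => Okamoto b t) a := by
  set d := tDigit t with hd
  set M := max a |1 - 2 * a| with hM
  have hM0 : 0 < M := lt_of_lt_of_le ha.1 (le_max_left _ _)
  have hM1 : M < 1 := M_lt_one ha
  set r₀ : ℝ := (1 - M) / 4 with hr₀def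
  have hr₀ : 0 < r₀ := by rw [hr₀def]; linarith
  set K : ℝ := M + 2 * r₀ with hKdef
  have hK0 : 0 < K := by rw [hKdef]; linarith
  have hK1 : K < 1 := by rw [hKdef, hr₀def]; linarith
  clear_value M r₀ K
  -- master bound
  have hBnd : ∀ m i, (((m+1).choose i : ℝ) * 2 ^ i * M ^ (m - i)) * r₀ ^ i ≤ K ^ (m+1) / M := by
    intro m i
    by_cases hi : i ≤ m + 1
    · have h1 : M * M ^ (m - i) ≤ M ^ (m + 1 - i) := by
        by_cases hc : i ≤ m
        · rw [show m + 1 - i = (m - i) + 1 by omega, pow_succ]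
          exact le_of_eq (by ring)
        · rw [show m - i = 0 by omega, show m + 1 - i = 0 by omega]
          simpa using hM1.le
      have h2 : ((m+1).choose i : ℝ) * (2 * r₀) ^ i * M ^ (m + 1 - i) ≤ K ^ (m + 1) := by
        have hKe : K ^ (m+1) = (2 * r₀ + M) ^ (m+1) := by rw [hKdef]; ring
        rw [hKe, add_pow (2 * r₀) M (m + 1)]
        have hmem : i ∈ Finset.range (m + 2) := Finset.mem_range.mpr (by omega)
        have := Finset.single_le_sum
          (f := fun k => (2 * r₀) ^ k * M ^ (m + 1 - k) * ((m+1).choose k : ℝ))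
          (fun k _ => by positivity) hmem
        calc ((m+1).choose i : ℝ) * (2 * r₀) ^ i * M ^ (m + 1 - i)
            = (2 * r₀) ^ i * M ^ (m + 1 - i) * ((m+1).choose i : ℝ) := by ring
          _ ≤ _ := this
      calc (((m+1).choose i : ℝ) * 2 ^ i * M ^ (m - i)) * r₀ ^ i
          = (((m+1).choose i : ℝ) * (2 * r₀) ^ i * (M * M ^ (m - i))) / M := by
            rw [mul_pow]
            field_simp
        _ ≤ (((m+1).choose i : ℝ) * (2 * r₀) ^ i * M ^ (m + 1 - i)) / M := by
            gcongr
        _ ≤ K ^ (m+1) / M := by gcongr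
    · rw [Nat.choose_eq_zero_of_lt (by omega)]
      simp only [Nat.cast_zero, zero_mul]
      positivity
  have hcTb : ∀ m i, |cT a d m i| ≤ K ^ m * (K / M / r₀ ^ i) := by
    intro m i
    have h1 := cT_bound ha d m i
    rw [← hM] at h1
    have h2 := hBnd m i
    have h3 : (((m+1).choose i : ℝ) * 2 ^ i * M ^ (m - i)) ≤ K ^ (m+1) / M / r₀ ^ i := by
      rw [le_div_iff₀ (by positivity : (0:ℝ) < r₀ ^ i)]
      exact h2
    calc |cT a d m i| ≤ ((m+1).choose i : ℝ) * 2 ^ i * M ^ (m - i) := h1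
      _ ≤ K ^ (m+1) / M / r₀ ^ i := h3
      _ = K ^ m * (K / M / r₀ ^ i) := by rw [pow_succ]; ring
  have hsumc : ∀ i, Summable (fun m => cT a d m i) := by
    intro i
    apply Summable.of_norm
    apply Summable.of_nonneg_of_le (fun _ => norm_nonneg _) (fun m => hcTb m i)
    exact (summable_geometric_of_lt_one hK0.le hK1).mul_right _
  set c : ℕ → ℝ := fun i => ∑' m, cT a d m i with hc
  set p : FormalMultilinearSeries ℝ ℝ ℝ :=
    fun i => c i • ContinuousMultilinearMap.mkPiAlgebraFin ℝ i ℝ with hp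
  have hpnorm : ∀ i, ‖p i‖ = |c i| := by
    intro i
    have he : p i = c i • ContinuousMultilinearMap.mkPiAlgebraFin ℝ i ℝ := rfl
    rw [he]
    rw [norm_smul (c i) (ContinuousMultilinearMap.mkPiAlgebraFin ℝ i ℝ), ContinuousMultilinearMap.norm_mkPiAlgebraFin, mul_one, Real.norm_eq_abs]
  set C₀ : ℝ := ∑' m : ℕ, K ^ m * (K / M) with hC₀
  have hgeo : Summable (fun m : ℕ => K ^ m * (K / M)) :=
    (summable_geometric_of_lt_one hK0.le hK1).mul_right _
  have hcb : ∀ i, |c i| * r₀ ^ i ≤ C₀ := by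
    intro i
    have hsn : Summable (fun m => |cT a d m i|) := by
      apply Summable.of_nonneg_of_le (fun _ => abs_nonneg _) (fun m => hcTb m i)
      exact (summable_geometric_of_lt_one hK0.le hK1).mul_right _
    have h1 : |c i| ≤ ∑' m, |cT a d m i| := by
      rw [hc]
      simpa [Real.norm_eq_abs] using norm_tsum_le_tsum_norm (f := fun m => cT a d m i) (by simpa [Real.norm_eq_abs] using hsn)
    calc |c i| * r₀ ^ i ≤ (∑' m, |cT a d m i|) * r₀ ^ i := by
          apply mul_le_mul_of_nonneg_right h1 (by positivity)
      _ = ∑' m, |cT a d m i| * r₀ ^ i := by rw [tsum_mul_right]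
      _ ≤ ∑' m : ℕ, K ^ m * (K / M) := by
          apply Summable.tsum_le_tsum _ (hsn.mul_right _) hgeo
          intro m
          calc |cT a d m i| * r₀ ^ i ≤ (K ^ m * (K / M / r₀ ^ i)) * r₀ ^ i := by
                apply mul_le_mul_of_nonneg_right (hcTb m i) (by positivity)
            _ = K ^ m * (K / M) := by field_simp
      _ = C₀ := rfl
  set r₀nn : NNReal := ⟨r₀, hr₀.le⟩ with hr₀nn
  have hradius : (r₀nn : ENNReal) ≤ p.radius := by
    apply p.le_radius_of_bound C₀
    intro i
    have : (r₀nn : ℝ) = r₀ := rfl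
    rw [hpnorm i, this]
    exact hcb i
  have hball : HasFPowerSeriesOnBall (fun b => Okamoto b t) p a r₀nn := by
    refine ⟨hradius, by exact_mod_cast hr₀, ?_⟩
    intro y hy
    have hy' : |y| < r₀ := by
      rw [EMetric.mem_ball, edist_zero_right] at hy
      have := ENNReal.coe_lt_coe.mp (by exact_mod_cast hy)
      exact_mod_cast this
    have hpapp : ∀ n : ℕ, (p n fun _ => y) = c n * y ^ n := by
      intro n
      rw [hp]
      simp only [ContinuousMultilinearMap.smul_apply,
        ContinuousMultilinearMap.mkPiAlgebraFin_apply, smul_eq_mul]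
      congr 1
      rw [List.prod_ofFn]
      simp
    -- 2D summability
    set u2 : ℕ × ℕ → ℝ := fun q => cT a d q.1 q.2 * y ^ q.2 with hu2def
    have hb2 : Summable (fun q : ℕ × ℕ => (K ^ q.1 * (K / M)) * (|y| / r₀) ^ q.2) := by
      apply Summable.mul_of_nonneg hgeo
        (summable_geometric_of_lt_one (by positivity) (by rwa [div_lt_one hr₀]))
      · intro m
        positivity
      · intro i
        positivity
    have hu2 : Summable u2 := by
      apply Summable.of_norm
      apply Summable.of_nonneg_of_le (fun _ => norm_nonneg _) _ hb2
      rintro ⟨m, i⟩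
      rw [hu2def]
      simp only [Real.norm_eq_abs, abs_mul, abs_pow]
      calc |cT a d m i| * |y| ^ i ≤ (K ^ m * (K / M / r₀ ^ i)) * |y| ^ i := by
            apply mul_le_mul_of_nonneg_right (hcTb m i) (by positivity)
        _ = (K ^ m * (K / M)) * (|y| / r₀) ^ i := by
            rw [div_pow, div_div]
            rw [div_eq_mul_inv, div_eq_mul_inv, mul_inv]
            ring
    have hS := hu2.hasSum
    have hrow : ∀ m, HasSum (fun i => u2 (m, i)) (okTerm (a + y) d m) := by
      intro m
      rw [cT_eval a d m y]
      apply hasSum_sum_of_ne_finset_zero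
      intro i hi
      have : m + 1 < i := by
        simp only [Finset.mem_range] at hi
        omega
      rw [hu2def]
      simp only
      rw [cT_zero_of_gt a d this, zero_mul]
    have hO : HasSum (fun m => okTerm (a + y) d m) (∑' q, u2 q) := hS.prod_fiberwise hrow
    have hcol : ∀ i, HasSum (fun m => u2 (m, i)) (c i * y ^ i) := by
      intro i
      exact (hsumc i).hasSum.mul_right _
    have hswap : HasSum (u2 ∘ (Equiv.prodComm ℕ ℕ)) (∑' q, u2 q) :=
      ((Equiv.prodComm ℕ ℕ).hasSum_iff).mpr hS
    have hP : HasSum (fun i => c i * y ^ i) (∑' q, u2 q) := by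
      apply hswap.prod_fiberwise
      intro i
      exact hcol i
    have hOk : Okamoto (a + y) t = ∑' q, u2 q := by
      rw [Okamoto_eq, hO.tsum_eq]
    rw [hOk]
    have he : (fun n => p n fun _ => y) = fun i => c i * y ^ i := funext hpapp
    rw [he]
    exact hP
  exact hball.analyticAt


lemma contDiff_rDig (N : WithTop ℕ∞) (e : ℕ) : ContDiff ℝ N (fun b => rDig b e) := by
  by_cases h : e = 1
  · simp only [rDig, if_pos h]
    fun_prop
  · simp only [rDig, if_neg h]
    fun_prop

lemma contDiff_qDig (N : WithTop ℕ∞) (e : ℕ) : ContDiff ℝ N (fun b => qDig b e) := by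
  by_cases h0 : e = 0
  · simp only [qDig, if_pos h0]
    fun_prop
  · by_cases h1 : e = 1
    · simp only [qDig, if_neg h0, if_pos h1]
      fun_prop
    · simp only [qDig, if_neg h0, if_neg h1]
      fun_prop

lemma contDiff_prod_rDig (N : WithTop ℕ∞) (m : ℕ) (f : ℕ → ℕ) :
    ContDiff ℝ N (fun b => ∏ k ∈ Finset.range m, rDig b (f k)) := by
  induction m with
  | zero => simpa using contDiff_const
  | succ m ih =>
    have : (fun b => ∏ k ∈ Finset.range (m+1), rDig b (f k))
        = fun b => (∏ k ∈ Finset.range m, rDig b (f k)) * rDig b (f m) := by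
      funext b
      rw [Finset.prod_range_succ]
    rw [this]
    exact ih.mul (contDiff_rDig N (f m))

lemma contDiff_Wt (N : WithTop ℕ∞) (n j : ℕ) : ContDiff ℝ N (fun b => Wt b n j) :=
  contDiff_prod_rDig N n (dig n j)

lemma contDiff_FS (N : WithTop ℕ∞) (n j : ℕ) : ContDiff ℝ N (fun b => FS b n j) := by
  unfold FS
  apply ContDiff.sum
  intro i _
  exact (contDiff_prod_rDig N i (dig n j)).mul (contDiff_qDig N (dig n j i))

/- ## iterated derivative helpers -/

lemma iteratedDerivWithin_eq_iteratedDeriv_of_isOpen {s : Set ℝ} (hs : IsOpen s) {x : ℝ}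
    (hx : x ∈ s) (f : ℝ → ℝ) (k : ℕ) :
    iteratedDerivWithin k f s x = iteratedDeriv k f x := by
  rw [iteratedDerivWithin, iteratedDeriv, iteratedFDerivWithin_of_isOpen k hs hx]

lemma iterD_add {f g : ℝ → ℝ} {k : ℕ} {x : ℝ} (hf : ContDiffAt ℝ k f x)
    (hg : ContDiffAt ℝ k g x) :
    iteratedDeriv k (fun b => f b + g b) x = iteratedDeriv k f x + iteratedDeriv k g x := by
  obtain ⟨s, hs, hsf⟩ := hf.contDiffOn le_rfl (by simp)
  obtain ⟨t, ht, htg⟩ := hg.contDiffOn le_rfl (by simp)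
  set v := interior (s ∩ t) with hv
  have hvo : IsOpen v := isOpen_interior
  have hxv : x ∈ v := by
    rw [hv, mem_interior_iff_mem_nhds]
    exact Filter.inter_mem hs ht
  have h1 : iteratedDerivWithin k (f + g) v x
      = iteratedDerivWithin k f v x + iteratedDerivWithin k g v x := by
    apply iteratedDerivWithin_add hxv hvo.uniqueDiffOn
    · exact hsf.mono (fun y hy => (interior_subset hy : y ∈ s ∩ t).1) x hxv
    · exact htg.mono (fun y hy => (interior_subset hy : y ∈ s ∩ t).2) x hxv
  have he : (fun b => f b + g b) = f + g := rfl
  rw [he, ← iteratedDerivWithin_eq_iteratedDeriv_of_isOpen hvo hxv f k,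
    ← iteratedDerivWithin_eq_iteratedDeriv_of_isOpen hvo hxv g k,
    ← iteratedDerivWithin_eq_iteratedDeriv_of_isOpen hvo hxv (f + g) k]
  exact h1

lemma iterD_const_sub {f : ℝ → ℝ} {k : ℕ} (hk : 1 ≤ k) (c : ℝ) (x : ℝ) :
    iteratedDeriv k (fun b => c - f b) x = - iteratedDeriv k f x := by
  obtain ⟨k', rfl⟩ : ∃ k', k = k' + 1 := ⟨k - 1, by omega⟩
  rw [iteratedDeriv_succ', iteratedDeriv_succ']
  have h1 : deriv (fun b => c - f b) = deriv (fun b => -f b) := by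
    funext z
    have he : (fun b => c - f b) = fun b => c + (- f b) := by
      funext b; ring
    rw [he, deriv_const_add]
  rw [h1]
  have h2 : deriv (fun b => -f b) = fun z => - deriv f z := by
    funext z
    exact deriv.neg
  rw [h2]
  rw [show (fun z => - deriv f z) = fun z => - (deriv f) z from rfl]
  exact iteratedDeriv_neg k' (deriv f) x

/-- the symmetry property of `M_{k,a}` on ternary intervals, and the point
symmetry `M_{k,a}(1-x) = -M_{k,a}(x)` for `k ≥ 1`. -/
theorem stmt18 (k : ℕ) (a : ℝ) (ha : a ∈ Set.Ioo (0:ℝ) 1) :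
    (∀ n : ℕ, ∀ j : ℕ, j < 3 ^ n → ∀ u ∈ Set.Icc (0:ℝ) (((3:ℝ) ^ n)⁻¹),
      Mfun k a ((j : ℝ) / 3 ^ n + u) - Mfun k a ((j : ℝ) / 3 ^ n) =
        Mfun k a (((j : ℝ) + 1) / 3 ^ n) - Mfun k a (((j : ℝ) + 1) / 3 ^ n - u)) ∧
    (1 ≤ k → ∀ x ∈ Set.Icc (0:ℝ) 1, Mfun k a (1 - x) = -Mfun k a x) := by
  have hIoo : Set.Ioo (0:ℝ) 1 ∈ 𝓝 a := isOpen_Ioo.mem_nhds ha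
  constructor
  · intro n j hj u hu
    obtain ⟨hu0, hu1⟩ := hu
    have h3 : (0:ℝ) < (3:ℝ) ^ n := by positivity
    rcases eq_or_lt_of_le hu0 with h0 | h0
    · rw [← h0]
      simp
    rcases eq_or_lt_of_le hu1 with h1 | h1
    · have e1 : (j:ℝ)/3^n + ((3:ℝ)^n)⁻¹ = ((j:ℝ)+1)/3^n := by field_simp
      have e2 : ((j:ℝ)+1)/3^n - ((3:ℝ)^n)⁻¹ = (j:ℝ)/3^n := by field_simp; ring
      rw [h1, e1, e2]
    -- main case : 0 < u < (3^n)⁻¹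
    set t : ℝ := (3:ℝ)^n * u with htdef
    have ht0 : 0 < t := mul_pos h3 h0
    have ht1 : t < 1 := by
      rw [htdef]
      calc (3:ℝ)^n * u < (3:ℝ)^n * ((3:ℝ)^n)⁻¹ := mul_lt_mul_of_pos_left h1 h3
        _ = 1 := mul_inv_cancel₀ (ne_of_gt h3)
    have hu0' : (0:ℝ) ≤ ((3:ℝ)^n)⁻¹ - u := by linarith
    have hu1' : ((3:ℝ)^n)⁻¹ - u < ((3:ℝ)^n)⁻¹ := by linarith
    have hxr : ((j:ℝ)+1)/3^n - u = (j:ℝ)/3^n + (((3:ℝ)^n)⁻¹ - u) := by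
      field_simp
      ring
    have h1t : (3:ℝ)^n * (((3:ℝ)^n)⁻¹ - u) = 1 - t := by
      rw [mul_sub, mul_inv_cancel₀ (ne_of_gt h3), htdef]
    have E1 : (fun b => Okamoto b ((j:ℝ)/3^n + u)) =ᶠ[𝓝 a]
        (fun b => FS b n j + Wt b n j * Okamoto b t) := by
      filter_upwards [hIoo] with b hb
      exact Okamoto_affine hb hj hu0 h1
    have E2 : (fun b => Okamoto b ((j:ℝ)/3^n)) =ᶠ[𝓝 a] (fun b => FS b n j) := by
      filter_upwards [hIoo] with b hb
      exact Okamoto_rat hb hj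
    have E3 : (fun b => Okamoto b (((j:ℝ)+1)/3^n)) =ᶠ[𝓝 a]
        (fun b => FS b n j + Wt b n j) := by
      filter_upwards [hIoo] with b hb
      exact Okamoto_right hb hj
    have E4 : (fun b => Okamoto b (((j:ℝ)+1)/3^n - u)) =ᶠ[𝓝 a]
        (fun b => (FS b n j + Wt b n j) + (-(Wt b n j * Okamoto b t))) := by
      filter_upwards [hIoo] with b hb
      rw [hxr, Okamoto_affine hb hj hu0' hu1', h1t]
      have hsym := Okamoto_symm hb (t := t) ⟨ht0.le, ht1.le⟩
      have hOs : Okamoto b (1 - t) = 1 - Okamoto b t := by linarith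
      rw [hOs]
      ring
    have hp : ContDiffAt ℝ k (fun b => FS b n j) a := (contDiff_FS k n j).contDiffAt
    have hw : ContDiffAt ℝ k (fun b => Wt b n j) a := (contDiff_Wt k n j).contDiffAt
    have hG : ContDiffAt ℝ k (fun b => Okamoto b t) a := (okamoto_analyticAt ha t).contDiffAt
    have hwG : ContDiffAt ℝ k (fun b => Wt b n j * Okamoto b t) a := hw.mul hG
    have m1 : Mfun k a ((j:ℝ)/3^n + u)
        = iteratedDeriv k (fun b => FS b n j + Wt b n j * Okamoto b t) a :=
      E1.iteratedDeriv_eq k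
    have m2 : Mfun k a ((j:ℝ)/3^n) = iteratedDeriv k (fun b => FS b n j) a :=
      E2.iteratedDeriv_eq k
    have m3 : Mfun k a (((j:ℝ)+1)/3^n)
        = iteratedDeriv k (fun b => FS b n j + Wt b n j) a :=
      E3.iteratedDeriv_eq k
    have m4 : Mfun k a (((j:ℝ)+1)/3^n - u)
        = iteratedDeriv k (fun b => (FS b n j + Wt b n j) + (-(Wt b n j * Okamoto b t))) a :=
      E4.iteratedDeriv_eq k
    rw [m1, m2, m3, m4]
    rw [iterD_add hp hwG, iterD_add (hp.add hw) hwG.neg, show iteratedDeriv k (fun x => -(Wt x n j * Okamoto x t)) a = -iteratedDeriv k (fun b => Wt b n j * Okamoto b t) a from iteratedDeriv_neg k _ a]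
    ring
  · intro hk x hx
    have E : (fun b => Okamoto b (1 - x)) =ᶠ[𝓝 a] (fun b => 1 - Okamoto b x) := by
      filter_upwards [hIoo] with b hb
      have := Okamoto_symm hb (t := x) hx
      linarith
    have m1 : Mfun k a (1 - x) = iteratedDeriv k (fun b => 1 - Okamoto b x) a :=
      E.iteratedDeriv_eq k
    rw [m1, iterD_const_sub hk]
    rfl
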